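/- Let (E,E₊) be an ordered Banach space with E₊ ≠ {0} and let 𝒢 ⊆ L(E) be a norm-bounded subgroup of the group of invertible bounded linear operators on E. Assume that every operator in 𝒢 is positive and that for each f ∈ E₊ \ {0} there exists T ∈ 𝒢 such that Tf is an almost interior point of E₊. Then E is one-dimensional and 𝒢 = {id_E}. -/

import Mathlib

open Filter Topology

set_option maxHeartbeats 1000000

/-- `f` is an almost interior point of the cone `C`: `f ∈ C` and every nonzero positive
continuous functional is strictly positive at `f`. -/
def AlmostInteriorPoint {E : Type*} [NormedAddCommGroup E] [NormedSpace ℝ E]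
    (C : Set E) (f : E) : Prop :=
  f ∈ C ∧ ∀ φ : E →L[ℝ] ℝ, (∀ g ∈ C, 0 ≤ φ g) → φ ≠ 0 → 0 < φ f


/-- Ekeland-type variational principle specialized to a nonnegative continuous linear
functional on a closed subset of a Banach space. -/
lemma ekeland_cone {E : Type*} [NormedAddCommGroup E] [NormedSpace ℝ E] [CompleteSpace E]
    {C : Set E} (hCcl : IsClosed C) (φ : E →L[ℝ] ℝ) (hφ : ∀ c ∈ C, 0 ≤ φ c)
    {w : E} (hw : w ∈ C) {lam : ℝ} (hlam : 0 < lam) :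
    ∃ v ∈ C, φ v ≤ φ w ∧ lam * ‖v - w‖ ≤ φ w ∧ ∀ c ∈ C, φ v - lam * ‖c - v‖ ≤ φ c := by
  classical
  set S : E → Set E := fun p => {c | c ∈ C ∧ φ c + lam * ‖c - p‖ ≤ φ p} with hSdef
  have hself : ∀ p ∈ C, p ∈ S p := fun p hp => ⟨hp, by simp⟩
  have hbdd : ∀ p : E, BddBelow (φ '' S p) := by
    intro p
    refine ⟨0, ?_⟩
    rintro a ⟨c, hc, rfl⟩
    exact hφ c hc.1
  have hstep : ∀ p, p ∈ C → ∀ n : ℕ,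
      ∃ q, (q ∈ C ∧ φ q + lam * ‖q - p‖ ≤ φ p) ∧ φ q ≤ sInf (φ '' S p) + (1/2)^n := by
    intro p hp n
    obtain ⟨a, ha, hlt⟩ := Real.lt_sInf_add_pos
      (⟨φ p, Set.mem_image_of_mem φ (hself p hp)⟩ : (φ '' S p).Nonempty)
      (by positivity : (0:ℝ) < (1/2)^n)
    obtain ⟨q, hq, rfl⟩ := ha
    exact ⟨q, hq, hlt.le⟩
  choose! F hF1 hF2 using hstep
  let x : ℕ → {y : E // y ∈ C} := fun n =>
    Nat.rec ⟨w, hw⟩ (fun n p => ⟨F p.1 n, (hF1 p.1 p.2 n).1⟩) n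
  have hx0 : ((x 0).1) = w := by rfl
  have hxs : ∀ n, (x (n+1)).1 = F (x n).1 n := fun n => by rfl
  have hmemC : ∀ n, (x n).1 ∈ C := fun n => (x n).2
  set a : ℕ → ℝ := fun n => φ (x n).1 with hadef
  have ha0 : ∀ n, 0 ≤ a n := fun n => hφ _ (hmemC n)
  have hdec : ∀ n, a (n+1) + lam * ‖(x (n+1)).1 - (x n).1‖ ≤ a n := by
    intro n
    have := hF1 (x n).1 (hmemC n) n
    rw [hadef]
    simp only [hxs n]
    exact this.2
  have hinf : ∀ n, a (n+1) ≤ sInf (φ '' S (x n).1) + (1/2)^n := by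
    intro n
    have := hF2 (x n).1 (hmemC n) n
    rw [hadef]
    simp only [hxs n]
    exact this
  have hchain : ∀ n m, n ≤ m → lam * ‖(x m).1 - (x n).1‖ + a m ≤ a n := by
    intro n m h
    induction m, h using Nat.le_induction with
    | base => simp
    | succ m hm ih =>
      have h1 := hdec m
      have tri : ‖(x (m+1)).1 - (x n).1‖ ≤
          ‖(x (m+1)).1 - (x m).1‖ + ‖(x m).1 - (x n).1‖ :=
        norm_sub_le_norm_sub_add_norm_sub _ _ _
      nlinarith [mul_le_mul_of_nonneg_left tri hlam.le]
  have hanti : ∀ n m, n ≤ m → a m ≤ a n := by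
    intro n m h
    have := hchain n m h
    nlinarith [norm_nonneg ((x m).1 - (x n).1)]
  have hbb : BddBelow (Set.range a) := by
    refine ⟨0, ?_⟩
    rintro r ⟨n, rfl⟩
    exact ha0 n
  have hconv : Tendsto a atTop (𝓝 (⨅ n, a n)) :=
    tendsto_atTop_ciInf (fun n m h => hanti n m h) hbb
  set L := ⨅ n, a n with hLdef
  have hL : ∀ n, L ≤ a n := fun n => ciInf_le hbb n
  have hcauchy : CauchySeq (fun n => (x n).1) := by
    apply cauchySeq_of_le_tendsto_0 (fun N => (a N - L) / lam)
    · intro n m N hn hm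
      rcases le_total n m with h | h
      · have := hchain n m h
        rw [dist_eq_norm, ← norm_neg, neg_sub]
        rw [div_eq_inv_mul]
        rw [← mul_le_mul_iff_right₀ hlam]
        have h2 : lam * (lam⁻¹ * (a N - L)) = a N - L := by
          field_simp
        rw [h2]
        have := hanti N n hn
        have := hL m
        nlinarith
      · have := hchain m n h
        rw [dist_eq_norm]
        rw [div_eq_inv_mul, ← mul_le_mul_iff_right₀ hlam]
        have h2 : lam * (lam⁻¹ * (a N - L)) = a N - L := by field_simp
        rw [h2]
        have := hanti N m hm
        have := hL n
        nlinarith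
    · have : Tendsto (fun N => (a N - L) / lam) atTop (𝓝 ((L - L) / lam)) :=
        (hconv.sub tendsto_const_nhds).div_const lam
      simpa using this
  obtain ⟨v, hv⟩ := cauchySeq_tendsto_of_complete hcauchy
  have hvC : v ∈ C := hCcl.mem_of_tendsto hv (Eventually.of_forall hmemC)
  have haconv : Tendsto a atTop (𝓝 (φ v)) := (φ.continuous.tendsto v).comp hv
  have hφva : ∀ n, φ v ≤ a n := by
    intro n
    refine le_of_tendsto haconv (eventually_atTop.2 ⟨n, fun m hm => hanti n m hm⟩)
  refine ⟨v, hvC, ?_, ?_, ?_⟩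
  · have := hφva 0
    rwa [hadef] at this
  · have hx : ∀ m, lam * ‖(x m).1 - w‖ ≤ φ w := by
      intro m
      have := hchain 0 m (Nat.zero_le m)
      rw [hx0] at this
      have := ha0 m
      have h0 : a 0 = φ w := by rw [hadef]; simp [hx0]
      nlinarith
    have htend : Tendsto (fun m => lam * ‖(x m).1 - w‖) atTop (𝓝 (lam * ‖v - w‖)) :=
      (continuous_const.mul ((continuous_id.sub continuous_const).norm)).continuousAt.tendsto.comp hv
    exact le_of_tendsto htend (Eventually.of_forall hx)
  · -- minimality
    have hvS : ∀ n, φ v + lam * ‖v - (x n).1‖ ≤ a n := by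
      intro n
      have htend : Tendsto (fun m => lam * ‖(x m).1 - (x n).1‖ + a m) atTop
          (𝓝 (lam * ‖v - (x n).1‖ + φ v)) := by
        have h1 : Tendsto (fun m => lam * ‖(x m).1 - (x n).1‖) atTop
            (𝓝 (lam * ‖v - (x n).1‖)) :=
          (continuous_const.mul ((continuous_id.sub continuous_const).norm)).continuousAt.tendsto.comp hv
        exact h1.add haconv
      have := le_of_tendsto htend (eventually_atTop.2 ⟨n, fun m hm => hchain n m hm⟩)
      linarith
    intro c hc
    by_contra hcon
    push_neg at hcon
    have hcS : ∀ n, sInf (φ '' S (x n).1) ≤ φ c := by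
      intro n
      refine csInf_le (hbdd _) ⟨c, ⟨hc, ?_⟩, rfl⟩
      have tri : ‖c - (x n).1‖ ≤ ‖c - v‖ + ‖v - (x n).1‖ :=
        norm_sub_le_norm_sub_add_norm_sub _ _ _
      have := hvS n
      nlinarith [mul_le_mul_of_nonneg_left tri hlam.le]
    have hfin : ∀ n, a (n+1) ≤ φ c + (1/2)^n := fun n => le_trans (hinf n) (by linarith [hcS n])
    have h1 : Tendsto (fun n => a (n+1)) atTop (𝓝 (φ v)) :=
      haconv.comp (tendsto_add_atTop_nat 1)
    have h2 : Tendsto (fun n : ℕ => φ c + (1/2:ℝ)^n) atTop (𝓝 (φ c)) := by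
      have := tendsto_pow_atTop_nhds_zero_of_lt_one (by norm_num : (0:ℝ) ≤ 1/2) (by norm_num)
      simpa using tendsto_const_nhds.add this
    have := le_of_tendsto_of_tendsto' h1 h2 hfin
    nlinarith [norm_nonneg (c - v)]

/-- In a closed convex cone all of whose nonzero points are almost interior points, there is
no point `w ≠ 0` which can be "pushed out" of the cone in some direction `y` by arbitrarily
small amounts. (Bishop–Phelps-style argument.) -/
lemma no_strict_corner {E : Type*} [NormedAddCommGroup E] [NormedSpace ℝ E] [CompleteSpace E]
    {C : Set E} (hCcl : IsClosed C) (h0 : (0:E) ∈ C)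
    (hsmul : ∀ t : ℝ, 0 ≤ t → ∀ x ∈ C, t • x ∈ C) (hconv : Convex ℝ C)
    (hai : ∀ f ∈ C, f ≠ 0 → AlmostInteriorPoint C f)
    {w y : E} (hw : w ∈ C) (hwne : w ≠ 0)
    (hy : ∀ ε : ℝ, 0 < ε → w - ε • y ∉ C) : False := by
  have hwnorm : 0 < ‖w‖ := norm_pos_iff.2 hwne
  set ε : ℝ := min (‖w‖ / 2) (1 / 2) with hεdef
  have hε : 0 < ε := lt_min (by positivity) (by norm_num)
  have hε1 : ε < 1 := lt_of_le_of_lt (min_le_right _ _) (by norm_num)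
  have hεw : ε < ‖w‖ := lt_of_le_of_lt (min_le_left _ _) (by linarith)
  set δ : ℝ := ε ^ 2 / (‖y‖ + 1) with hδdef
  have hynn : (0:ℝ) ≤ ‖y‖ := norm_nonneg y
  have hδ : 0 < δ := by positivity
  have hz : w - δ • y ∉ C := hy δ hδ
  obtain ⟨f, u, hfC, hfz⟩ := geometric_hahn_banach_closed_point hconv hCcl hz
  have hu : 0 < u := by simpa using hfC 0 h0
  have hfneg : ∀ c ∈ C, f c ≤ 0 := by
    intro c hc
    by_contra h
    push_neg at h
    have ht := hfC _ (hsmul ((u+1)/(f c)) (by positivity) c hc)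
    rw [map_smul, smul_eq_mul, div_mul_cancel₀ _ (ne_of_gt h)] at ht
    linarith
  set φ' : E →L[ℝ] ℝ := -f with hφ'def
  have hφ'C : ∀ c ∈ C, 0 ≤ φ' c := by
    intro c hc
    simp only [hφ'def, ContinuousLinearMap.neg_apply]
    linarith [hfneg c hc]
  have hφ'z : φ' (w - δ • y) < 0 := by
    simp only [hφ'def, ContinuousLinearMap.neg_apply]
    linarith
  have hφ'w : φ' w < δ * φ' y := by
    rw [map_sub, map_smul, smul_eq_mul] at hφ'z
    linarith
  have hφ'ne : φ' ≠ 0 := by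
    intro h
    rw [h] at hφ'z
    simp at hφ'z
  have hn : 0 < ‖φ'‖ := by
    rcases lt_or_eq_of_le (norm_nonneg φ') with h | h
    · exact h
    · exact absurd (φ'.opNorm_zero_iff.1 h.symm) hφ'ne
  set φ : E →L[ℝ] ℝ := ‖φ'‖⁻¹ • φ' with hφdef
  have hφnorm : ‖φ‖ = 1 := by
    rw [hφdef, norm_smul ‖φ'‖⁻¹ φ', norm_inv, norm_norm, inv_mul_cancel₀ hn.ne']
  have hφC : ∀ c ∈ C, 0 ≤ φ c := by
    intro c hc
    simp only [hφdef, ContinuousLinearMap.smul_apply, smul_eq_mul]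
    exact mul_nonneg (by positivity) (hφ'C c hc)
  have hφw : φ w < ε ^ 2 := by
    have h1 : φ' y ≤ ‖φ'‖ * ‖y‖ := by
      calc φ' y ≤ ‖φ' y‖ := le_abs_self _
      _ ≤ ‖φ'‖ * ‖y‖ := φ'.le_opNorm y
    have h2 : φ w = ‖φ'‖⁻¹ * φ' w := by
      simp [hφdef]
    have h3 : ‖φ'‖⁻¹ * φ' w < ‖φ'‖⁻¹ * (δ * φ' y) :=
      mul_lt_mul_of_pos_left hφ'w (by positivity)
    have h4 : ‖φ'‖⁻¹ * (δ * φ' y) ≤ δ * ‖y‖ := by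
      have h5 : δ * φ' y ≤ δ * (‖φ'‖ * ‖y‖) := mul_le_mul_of_nonneg_left h1 hδ.le
      calc ‖φ'‖⁻¹ * (δ * φ' y) ≤ ‖φ'‖⁻¹ * (δ * (‖φ'‖ * ‖y‖)) :=
            mul_le_mul_of_nonneg_left h5 (by positivity)
      _ = δ * ‖y‖ := by field_simp
    have h6 : δ * ‖y‖ < ε ^ 2 := by
      rw [hδdef]
      rw [div_mul_eq_mul_div, div_lt_iff₀ (by positivity)]
      nlinarith
    linarith [h2 ▸ lt_of_lt_of_le h3 h4]
  obtain ⟨v, hvC, hvw, hvdist, hvmin⟩ := ekeland_cone hCcl φ hφC hw hε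
  have hvne : v ≠ 0 := by
    intro h
    rw [h, zero_sub, norm_neg] at hvdist
    nlinarith
  set K : Set E := {h : E | φ h + ε * ‖h‖ < 0} with hKdef
  have hKopen : IsOpen K := by
    have : Continuous fun h : E => φ h + ε * ‖h‖ :=
      φ.continuous.add (continuous_const.mul continuous_norm)
    exact isOpen_lt this continuous_const
  have hKconv : Convex ℝ K := by
    intro p hp q hq s t hs ht hst
    simp only [hKdef, Set.mem_setOf_eq] at hp hq ⊢
    have hnorm : ‖s • p + t • q‖ ≤ s * ‖p‖ + t * ‖q‖ := by
      calc ‖s • p + t • q‖ ≤ ‖s • p‖ + ‖t • q‖ := norm_add_le _ _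
      _ = s * ‖p‖ + t * ‖q‖ := by rw [norm_smul, norm_smul, Real.norm_eq_abs, Real.norm_eq_abs,
            abs_of_nonneg hs, abs_of_nonneg ht]
    have hφe : φ (s • p + t • q) = s * φ p + t * φ q := by
      rw [φ.map_add, φ.map_smul, φ.map_smul, smul_eq_mul, smul_eq_mul]
    have key : φ (s • p + t • q) + ε * ‖s • p + t • q‖ ≤
        s * (φ p + ε * ‖p‖) + t * (φ q + ε * ‖q‖) := by
      rw [hφe]
      nlinarith [mul_le_mul_of_nonneg_left hnorm hε.le]
    rcases lt_or_ge 0 s with h | h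
    · have h1 : s * (φ p + ε * ‖p‖) < 0 := mul_neg_of_pos_of_neg h hp
      have h2 : t * (φ q + ε * ‖q‖) ≤ 0 := mul_nonpos_of_nonneg_of_nonpos ht hq.le
      linarith
    · have hs0 : s = 0 := le_antisymm h hs
      have ht0 : 0 < t := by rw [hs0] at hst; linarith
      have h1 : s * (φ p + ε * ‖p‖) = 0 := by rw [hs0, zero_mul]
      have h2 : t * (φ q + ε * ‖q‖) < 0 := mul_neg_of_pos_of_neg ht0 hq
      linarith
  have hKne : ∃ h₀, h₀ ∈ K := by
    set r : ℝ := (1 + ε) / 2 with hrdef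
    have hrε : ε < r := by rw [hrdef]; linarith
    have hr1 : r < 1 := by rw [hrdef]; linarith
    obtain ⟨x₁, hx₁, hrx₁⟩ := φ.exists_lt_apply_of_lt_opNorm (by rw [hφnorm]; exact hr1)
    rw [Real.norm_eq_abs] at hrx₁
    rcases le_or_gt 0 (φ x₁) with h | h
    · refine ⟨-x₁, ?_⟩
      simp only [hKdef, Set.mem_setOf_eq, map_neg, norm_neg]
      rw [abs_of_nonneg h] at hrx₁
      have : ε * ‖x₁‖ ≤ ε * 1 := mul_le_mul_of_nonneg_left hx₁.le hε.le
      linarith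
    · refine ⟨x₁, ?_⟩
      simp only [hKdef, Set.mem_setOf_eq]
      rw [abs_of_neg h] at hrx₁
      have : ε * ‖x₁‖ ≤ ε * 1 := mul_le_mul_of_nonneg_left hx₁.le hε.le
      linarith
  obtain ⟨h₀, hh₀⟩ := hKne
  set D : Set E := (fun c => c - v) '' C with hDdef
  have hDconv : Convex ℝ D := by
    have h : (fun c : E => c - v) = fun z : E => -v + z := by
      funext c
      abel
    rw [hDdef, h]
    exact hconv.translate (-v)
  have hdisj : Disjoint K D := by
    rw [Set.disjoint_left]
    rintro h hh ⟨c, hc, rfl⟩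
    simp only [hKdef, Set.mem_setOf_eq, map_sub] at hh
    have := hvmin c hc
    linarith
  obtain ⟨g, u₂, hgK, hgD⟩ := geometric_hahn_banach_open hKconv hKopen hDconv hdisj
  have hKscale : ∀ t : ℝ, 0 < t → t • h₀ ∈ K := by
    intro t ht
    simp only [hKdef, Set.mem_setOf_eq] at hh₀ ⊢
    rw [map_smul, smul_eq_mul, norm_smul, Real.norm_eq_abs, abs_of_pos ht]
    nlinarith
  have hu₂ : 0 ≤ u₂ := by
    by_contra h
    push_neg at h
    set t : ℝ := -u₂ / (2 * (|g h₀| + 1)) with htdef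
    have ht : 0 < t := div_pos (by linarith) (by positivity)
    have h1 := hgK _ (hKscale t ht)
    rw [map_smul, smul_eq_mul] at h1
    have h2 : -(t * (|g h₀| + 1)) ≤ t * g h₀ := by
      nlinarith [neg_abs_le (g h₀)]
    have h3 : t * (|g h₀| + 1) = -u₂ / 2 := by
      rw [htdef]; field_simp
    linarith
  have hgC : ∀ c ∈ C, 0 ≤ g c := by
    intro c hc
    by_contra h
    push_neg at h
    set t : ℝ := (|u₂| + |g v| + 1) / (-(g c)) with htdef
    have ht : 0 ≤ t := le_of_lt (div_pos (by positivity) (by linarith))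
    have h1 := hgD _ ⟨t • c, hsmul t ht c hc, rfl⟩
    rw [map_sub, map_smul, smul_eq_mul] at h1
    have h2 : t * g c = -(|u₂| + |g v| + 1) := by
      rw [htdef]
      field_simp [ne_of_lt h]
    rw [h2] at h1
    have := abs_nonneg u₂
    have := neg_abs_le u₂
    have := neg_abs_le (g v)
    have := le_abs_self (g v)
    linarith
  have hgv : g v = 0 := by
    have h1 := hgD _ ⟨0, h0, rfl⟩
    rw [map_sub, map_zero] at h1
    have h2 := hgC v hvC
    linarith
  have hgne : g ≠ 0 := by
    intro h
    have h1 := hgK h₀ hh₀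
    have h2 := hgD _ ⟨0, h0, rfl⟩
    rw [h] at h1 h2
    simp at h1 h2
    linarith
  have := (hai v hvC hvne).2 g hgC hgne
  rw [hgv] at this
  exact lt_irrefl 0 this

/-- Let `(E, E₊)` be an ordered Banach space with `E₊ ≠ {0}` and let
`𝒢 ⊆ L(E)` be a norm-bounded subgroup of the invertible operators consisting of positive
operators such that every `0 ≠ f ∈ E₊` is mapped by some `T ∈ 𝒢` to an almost interior point of
`E₊`. Then `E` is one-dimensional and `𝒢 = {id_E}`. -/
theorem statement15 {E : Type*} [NormedAddCommGroup E] [NormedSpace ℝ E] [CompleteSpace E]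
    (C : Set E) (hCcl : IsClosed C)
    (hCcone : ∀ a b : ℝ, 0 ≤ a → 0 ≤ b → ∀ x ∈ C, ∀ y ∈ C, a • x + b • y ∈ C)
    (hCpointed : C ∩ (-C) = {0})
    (hCne : C ≠ {0})
    (G : Set (E →L[ℝ] E))
    (hone : (1 : E →L[ℝ] E) ∈ G)
    (hmul : ∀ A ∈ G, ∀ B ∈ G, A * B ∈ G)
    (hinv : ∀ A ∈ G, ∃ B ∈ G, A * B = 1 ∧ B * A = 1)
    (hGbdd : ∃ M : ℝ, ∀ A ∈ G, ‖A‖ ≤ M)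
    (hpos : ∀ A ∈ G, ∀ f ∈ C, A f ∈ C)
    (hstrong : ∀ f ∈ C, f ≠ 0 → ∃ A ∈ G, AlmostInteriorPoint C (A f)) :
    Module.finrank ℝ E = 1 ∧ G = {1} := by
  classical
  -- Basic cone facts
  have h0C : (0:E) ∈ C := by
    have : (0:E) ∈ C ∩ (-C) := by rw [hCpointed]; rfl
    exact this.1
  have hsmul : ∀ t : ℝ, 0 ≤ t → ∀ x ∈ C, t • x ∈ C := by
    intro t ht x hx
    have := hCcone t 0 ht le_rfl x hx 0 h0C
    simpa using this
  have hconv : Convex ℝ C := by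
    intro x hx y hy a b ha hb hab
    exact hCcone a b ha hb x hx y hy
  have hf₀ : ∃ f₀, f₀ ∈ C ∧ f₀ ≠ 0 := by
    by_contra h
    push_neg at h
    apply hCne
    apply Set.eq_singleton_iff_unique_mem.2
    exact ⟨h0C, h⟩
  obtain ⟨f₀, hf₀C, hf₀ne⟩ := hf₀
  -- every nonzero element of the cone is an almost interior point
  have hai : ∀ f ∈ C, f ≠ 0 → AlmostInteriorPoint C f := by
    intro f hf hne
    obtain ⟨A, hA, hAf⟩ := hstrong f hf hne
    obtain ⟨B, hB, hAB, hBA⟩ := hinv A hA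
    have hBAx : ∀ x : E, B (A x) = x := by
      intro x
      have := ContinuousLinearMap.ext_iff.1 hBA x
      simpa [ContinuousLinearMap.mul_apply] using this
    refine ⟨hf, ?_⟩
    intro φ hφ hφne
    have hcomp : 0 < (φ.comp B) (A f) := by
      apply hAf.2 (φ.comp B)
      · intro g hg
        exact hφ _ (hpos B hB g hg)
      · intro h
        apply hφne
        ext x
        have := ContinuousLinearMap.ext_iff.1 h (A x)
        simpa [ContinuousLinearMap.comp_apply, hBAx x] using this
    simpa [ContinuousLinearMap.comp_apply, hBAx f] using hcomp
  -- every element of the cone is a nonnegative multiple of f₀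
  have hdep : ∀ x ∈ C, ∃ t : ℝ, 0 ≤ t ∧ x = t • f₀ := by
    intro x hx
    set S : Set ℝ := {l : ℝ | 0 ≤ l ∧ x - l • f₀ ∈ C} with hSdef
    have hS0 : (0:ℝ) ∈ S := ⟨le_rfl, by simpa using hx⟩
    have hSclosed : IsClosed S := by
      have : S = Set.Ici (0:ℝ) ∩ (fun l : ℝ => x - l • f₀) ⁻¹' C := rfl
      rw [this]
      exact isClosed_Ici.inter (hCcl.preimage (by fun_prop))
    have hSbdd : BddAbove S := by
      by_contra hb
      rw [not_bddAbove_iff] at hb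
      have hln : ∀ n : ℕ, ∃ l, l ∈ S ∧ (n:ℝ) + 1 < l := by
        intro n
        obtain ⟨l, hl, hl'⟩ := hb ((n:ℝ) + 1)
        exact ⟨l, hl, hl'⟩
      choose l hl hl' using hln
      have hl0 : ∀ n, 0 < l n := fun n => lt_of_le_of_lt (by positivity) (hl' n)
      have hmemn : ∀ n, (l n)⁻¹ • x - f₀ ∈ C := by
        intro n
        have := hsmul (l n)⁻¹ (inv_nonneg.2 (hl0 n).le) _ (hl n).2
        rwa [smul_sub, smul_smul, inv_mul_cancel₀ (hl0 n).ne', one_smul] at this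
      have hlinf : Tendsto (fun n => (l n)⁻¹) atTop (𝓝 0) := by
        apply tendsto_inv_atTop_zero.comp
        apply tendsto_atTop_mono (fun n => (hl' n).le)
        exact tendsto_atTop_add_const_right _ 1 tendsto_natCast_atTop_atTop
      have hlim : Tendsto (fun n => (l n)⁻¹ • x - f₀) atTop (𝓝 (-f₀)) := by
        have h1 : Tendsto (fun n => (l n)⁻¹ • x) atTop (𝓝 ((0:ℝ) • x)) :=
          hlinf.smul_const x
        rw [zero_smul] at h1
        simpa using h1.sub_const f₀
      have hmf₀ : -f₀ ∈ C := hCcl.mem_of_tendsto hlim (Eventually.of_forall hmemn)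
      have : f₀ ∈ C ∩ (-C) := ⟨hf₀C, by rwa [Set.mem_neg]⟩
      rw [hCpointed] at this
      exact hf₀ne this
    set l₀ : ℝ := sSup S with hl₀def
    have hl₀ : l₀ ∈ S := hSclosed.csSup_mem ⟨0, hS0⟩ hSbdd
    set w : E := x - l₀ • f₀ with hwdef
    by_cases hw0 : w = 0
    · refine ⟨l₀, hl₀.1, ?_⟩
      rw [hwdef, sub_eq_zero] at hw0
      exact hw0
    · exfalso
      refine no_strict_corner hCcl h0C hsmul hconv hai hl₀.2 hw0 (y := f₀) ?_
      intro ε hε hmem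
      have hmem' : x - (l₀ + ε) • f₀ ∈ C := by
        have : w - ε • f₀ = x - (l₀ + ε) • f₀ := by
          rw [hwdef, add_smul]
          abel
        rwa [this] at hmem
      have : l₀ + ε ∈ S := ⟨by linarith [hl₀.1], hmem'⟩
      have := le_csSup hSbdd this
      linarith
  -- span of f₀ is everything
  have hspan : Submodule.span ℝ {f₀} = ⊤ := by
    by_contra hne
    obtain ⟨x₀, hx₀⟩ : ∃ x₀, x₀ ∉ Submodule.span ℝ {f₀} := by
      by_contra h
      push_neg at h
      exact hne (Submodule.eq_top_iff'.2 h)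
    have hFclosed : IsClosed ((Submodule.span ℝ {f₀} : Submodule ℝ E) : Set E) :=
      (Submodule.span ℝ {f₀}).closed_of_finiteDimensional
    obtain ⟨g, u, hgF, hgx⟩ :=
      geometric_hahn_banach_closed_point (Submodule.span ℝ {f₀}).convex hFclosed hx₀
    have hu : 0 < u := by simpa using hgF 0 (Submodule.zero_mem _)
    have hg0 : ∀ a ∈ Submodule.span ℝ {f₀}, g a = 0 := by
      intro a ha
      by_contra h
      have ht := hgF _ (Submodule.smul_mem _ ((u+1)/(g a)) ha)
      rw [map_smul, smul_eq_mul, div_mul_cancel₀ _ h] at ht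
      linarith
    have hgC : ∀ c ∈ C, g c = 0 := by
      intro c hc
      obtain ⟨t, _, rfl⟩ := hdep c hc
      exact hg0 _ (Submodule.smul_mem _ t (Submodule.mem_span_singleton_self f₀))
    have hgne : g ≠ 0 := by
      intro h
      rw [h] at hgx
      simp at hgx
      linarith
    have := (hai f₀ hf₀C hf₀ne).2 g (fun c hc => (hgC c hc).ge) hgne
    rw [hg0 f₀ (Submodule.mem_span_singleton_self f₀)] at this
    exact lt_irrefl 0 this
  have hrank : Module.finrank ℝ E = 1 := by
    apply finrank_eq_one f₀ hf₀ne
    intro z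
    have hz : z ∈ Submodule.span ℝ {f₀} := hspan ▸ Submodule.mem_top
    obtain ⟨c, hc⟩ := Submodule.mem_span_singleton.1 hz
    exact ⟨c, hc⟩
  obtain ⟨M, hM⟩ := hGbdd
  have hf₀pos : 0 < ‖f₀‖ := norm_pos_iff.2 hf₀ne
  -- scalar bound: if T' ∈ G scales f₀ by d > 0 then d ≤ 1
  have key : ∀ T' : E →L[ℝ] E, T' ∈ G → ∀ d : ℝ, T' f₀ = d • f₀ → 0 < d → d ≤ 1 := by
    intro T' hT' d hf hd
    by_contra h
    push_neg at h
    have hpow : ∀ n : ℕ, T' ^ n ∈ G ∧ (T' ^ n) f₀ = d ^ n • f₀ := by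
      intro n
      induction n with
      | zero => simpa using hone
      | succ n ih =>
        constructor
        · rw [pow_succ]
          exact hmul _ ih.1 _ hT'
        · rw [pow_succ, ContinuousLinearMap.mul_apply, hf, map_smul, ih.2, smul_smul]
          congr 1
          ring
    obtain ⟨n, hn⟩ := exists_nat_gt ((M + 1) / (d - 1))
    have h1 : 1 + (n:ℝ) * (d - 1) ≤ d ^ n := by
      have := one_add_mul_le_pow (by linarith : (-2:ℝ) ≤ d - 1) n
      simpa using this
    have h2 : ‖(T' ^ n) f₀‖ ≤ M * ‖f₀‖ := by
      calc ‖(T' ^ n) f₀‖ ≤ ‖T' ^ n‖ * ‖f₀‖ := (T' ^ n).le_opNorm f₀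
      _ ≤ M * ‖f₀‖ := mul_le_mul_of_nonneg_right (hM _ (hpow n).1) (norm_nonneg _)
    have h3 : ‖(T' ^ n) f₀‖ = d ^ n * ‖f₀‖ := by
      rw [(hpow n).2, norm_smul, Real.norm_eq_abs, abs_of_pos (pow_pos hd n)]
    have h4 : (M + 1) < (n:ℝ) * (d - 1) := by
      rw [div_lt_iff₀ (by linarith)] at hn
      linarith
    nlinarith
  have hGone : ∀ T ∈ G, T = 1 := by
    intro T hT
    obtain ⟨c, hc0, hc⟩ := hdep (T f₀) (hpos T hT f₀ hf₀C)
    obtain ⟨B, hB, hTB, hBT⟩ := hinv T hT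
    have hBTx : ∀ x : E, B (T x) = x := by
      intro x
      have := ContinuousLinearMap.ext_iff.1 hBT x
      simpa [ContinuousLinearMap.mul_apply] using this
    have hcne : c ≠ 0 := by
      intro h
      rw [h, zero_smul] at hc
      have := hBTx f₀
      rw [hc, map_zero] at this
      exact hf₀ne this.symm
    have hcpos : 0 < c := lt_of_le_of_ne hc0 (Ne.symm hcne)
    have hc1 : c ≤ 1 := key T hT c hc hcpos
    have hBf : B f₀ = c⁻¹ • f₀ := by
      have h1 := hBTx f₀
      rw [hc, map_smul] at h1
      have : c⁻¹ • (c • B f₀) = c⁻¹ • f₀ := by rw [h1]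
      rwa [smul_smul, inv_mul_cancel₀ hcne, one_smul] at this
    have hcinv1 : c⁻¹ ≤ 1 := key B hB c⁻¹ hBf (by positivity)
    have hceq : c = 1 := by
      have h5 : c * c⁻¹ ≤ c * 1 := mul_le_mul_of_nonneg_left hcinv1 hcpos.le
      rw [mul_inv_cancel₀ hcne, mul_one] at h5
      linarith
    ext x
    have hx : x ∈ Submodule.span ℝ {f₀} := hspan ▸ Submodule.mem_top
    obtain ⟨t, rfl⟩ := Submodule.mem_span_singleton.1 hx
    rw [map_smul, hc, hceq, one_smul, ContinuousLinearMap.one_apply]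
  exact ⟨hrank, Set.eq_singleton_iff_unique_mem.2 ⟨hone, hGone⟩⟩
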